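/- Let δ > −1 and let ₂F₁E_{(α,β)}(a₁,a₂;b₁;u) = Σ_{r=0}^∞ (a₁)_r (a₂)_r u^r / ((b₁)_r Γ(αr+β)) with α, β > 0. Then for 0 < x < 1, ∫₀^x u^δ · ₂F₁E_{(α,β)}(a₁,a₂;b₁;u) du = (x^{δ+1}/(δ+1)) · Σ_{r=0}^∞ (a₁)_r (a₂)_r (δ+1)_r x^r / ((b₁)_r (δ+2)_r Γ(αr+β)), i.e. an antiderivative of u^δ ₂F₁E_{(α,β)}(a₁,a₂;b₁;u) on (0,1) is (u^{δ+1}/(δ+1)) ₃F₂E_{(α,β)}(a₁,a₂,δ+1; b₁,δ+2; u). -/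

import Mathlib

open Real Filter

noncomputable def poch (a : ℝ) (r : ℕ) : ℝ := (ascPochhammer ℝ r).eval a

lemma poch_succ (a : ℝ) (r : ℕ) : poch a (r + 1) = poch a r * (a + r) := by
  simp [poch, ascPochhammer_succ_right]

lemma poch_eq_prod (a : ℝ) (r : ℕ) : poch a r = ∏ k ∈ Finset.range r, (a + k) := by
  induction r with
  | zero => simp [poch]
  | succ n ih => rw [poch_succ, ih, Finset.prod_range_succ]

lemma poch_ne_zero {a : ℝ} (h : ∀ n : ℕ, a ≠ -n) (r : ℕ) : poch a r ≠ 0 := by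
  rw [poch_eq_prod]
  exact Finset.prod_ne_zero_iff.2 fun k _ => fun hk => h k (by linarith)

lemma poch_pos {a : ℝ} (h : 0 < a) (r : ℕ) : 0 < poch a r := by
  rw [poch_eq_prod]
  exact Finset.prod_pos fun k _ => by positivity

lemma poch_key (δ : ℝ) (r : ℕ) : poch (δ + 1) r * (δ + 1 + r) = (δ + 1) * poch (δ + 2) r := by
  induction r with
  | zero => simp [poch]
  | succ n ih =>
    rw [poch_succ, poch_succ]
    push_cast
    linear_combination (δ + 2 + (n:ℝ)) * ih

lemma Gamma_add_le {x α : ℝ} (hx : 0 < x) (hα0 : 0 ≤ α) (hα1 : α ≤ 1) :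
    Gamma (x + α) ≤ Gamma x * x ^ α := by
  have hx1 : (0:ℝ) < x + 1 := by linarith
  have hxα : (0:ℝ) < x + α := by linarith
  have hc := convexOn_log_Gamma.2 (Set.mem_Ioi.2 hx) (Set.mem_Ioi.2 hx1)
    (by linarith : (0:ℝ) ≤ 1 - α) hα0 (by ring)
  simp only [smul_eq_mul, Function.comp_apply] at hc
  have he : (1 - α) * x + α * (x + 1) = x + α := by ring
  rw [he] at hc
  have hg1 : Gamma (x + 1) = x * Gamma x := Gamma_add_one hx.ne'
  have hgpos : 0 < Gamma x := Gamma_pos_of_pos hx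
  have hgpos2 : 0 < Gamma (x + α) := Gamma_pos_of_pos hxα
  have : log (Gamma (x + α)) ≤ log (Gamma x * x ^ α) := by
    rw [log_mul hgpos.ne' (rpow_pos_of_pos hx α).ne', log_rpow hx]
    rw [hg1, log_mul hx.ne' hgpos.ne'] at hc
    linarith
  exact (log_le_log_iff hgpos2 (by positivity)).1 this

lemma Gamma_add_ge {x α : ℝ} (hx : 1 ≤ x) (hα : 1 ≤ α) :
    x * Gamma x ≤ Gamma (x + α) := by
  have h0 : (0:ℝ) < x := by linarith
  rw [← Gamma_add_one h0.ne']
  exact Gamma_strictMonoOn_Ici.monotoneOn (by simp; linarith) (by simp; linarith) (by linarith)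

lemma aux_tendsto_atTop (q : ℝ) : Tendsto (fun r : ℕ => q + (r:ℝ)) atTop atTop :=
  tendsto_atTop_add_const_left _ q tendsto_natCast_atTop_atTop

lemma aux_tendsto_affine {α : ℝ} (hα : 0 < α) (β : ℝ) :
    Tendsto (fun r : ℕ => α * (r:ℝ) + β) atTop atTop :=
  tendsto_atTop_add_const_right _ β (tendsto_natCast_atTop_atTop.const_mul_atTop hα)

lemma L1 (p q : ℝ) : Tendsto (fun r : ℕ => (p + r) / (q + r)) atTop (nhds 1) := by
  have h : Tendsto (fun r : ℕ => 1 + (p - q) / (q + r)) atTop (nhds 1) := by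
    have := (tendsto_const_nhds (x := p - q) (f := atTop (α := ℕ))).div_atTop (aux_tendsto_atTop q)
    simpa using tendsto_const_nhds.add this
  refine h.congr' ?_
  filter_upwards [eventually_gt_atTop ⌈|q|⌉₊] with r hr
  have hq : (0:ℝ) < q + r := by
    have h1 : |q| < r := by
      calc |q| ≤ ⌈|q|⌉₊ := Nat.le_ceil _
      _ < r := by exact_mod_cast hr
    have := neg_abs_le q; linarith
  field_simp
  ring

lemma L2 (p : ℝ) {α : ℝ} (hα : 0 < α) (β : ℝ) :
    Tendsto (fun r : ℕ => (p + r) / (α * r + β)) atTop (nhds (1 / α)) := by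
  have h : Tendsto (fun r : ℕ => 1 / α + ((α * p - β) / α) / (α * r + β)) atTop (nhds (1 / α)) := by
    have := (tendsto_const_nhds (x := (α * p - β) / α) (f := atTop (α := ℕ))).div_atTop
      (aux_tendsto_affine hα β)
    simpa using tendsto_const_nhds.add this
  refine h.congr' ?_
  filter_upwards [(aux_tendsto_affine hα β).eventually_gt_atTop 0] with r hr
  field_simp
  ring

lemma tendsto_ratio (a₁ a₂ b₁ : ℝ) {α : ℝ} (hα : 0 < α) (β : ℝ) :
    Tendsto (fun r : ℕ => ((a₁ + r) * (a₂ + r)) / ((b₁ + r) * (α * r + β))) atTop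
      (nhds (1 / α)) := by
  have h := (L1 a₁ b₁).mul (L2 a₂ hα β)
  rw [one_mul] at h
  refine h.congr' ?_
  filter_upwards [(aux_tendsto_atTop b₁).eventually_gt_atTop 0,
    (aux_tendsto_affine hα β).eventually_gt_atTop 0] with r h1 h2
  field_simp

lemma tendsto_ratio_atTop (a₁ a₂ b₁ : ℝ) {α β : ℝ} (hα : 0 < α) (hα1 : α < 1) (hβ : 0 < β) :
    Tendsto (fun r : ℕ => (|a₁ + r| * |a₂ + r|) / (|b₁ + r| * (α * r + β) ^ (α:ℝ)))
      atTop atTop := by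
  set K : ℝ := (α + β) ^ (α:ℝ) with hKdef
  have hK : 0 < K := rpow_pos_of_pos (by linarith) _
  have hm : Tendsto (fun r : ℕ => (r:ℝ) ^ (1 - α) * (1 / (8 * K))) atTop atTop :=
    ((tendsto_rpow_atTop (by linarith)).comp tendsto_natCast_atTop_atTop).atTop_mul_const
      (by positivity)
  refine tendsto_atTop_mono' atTop ?_ hm
  filter_upwards [tendsto_natCast_atTop_atTop.eventually_ge_atTop
    (max (max (2 * |a₁|) (2 * |a₂|)) (max (|b₁| + 1) 1))] with r hr
  set t : ℝ := (r:ℝ) with htdef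
  have h1 : 2 * |a₁| ≤ t := le_trans (le_max_left _ _) (le_trans (le_max_left _ _) hr)
  have h2 : 2 * |a₂| ≤ t := le_trans (le_max_right _ _) (le_trans (le_max_left _ _) hr)
  have h3 : |b₁| + 1 ≤ t := le_trans (le_max_left _ _) (le_trans (le_max_right _ _) hr)
  have h4 : (1:ℝ) ≤ t := le_trans (le_max_right _ _) (le_trans (le_max_right _ _) hr)
  have ht0 : 0 < t := by linarith
  have htα : (0:ℝ) < t ^ (α:ℝ) := rpow_pos_of_pos ht0 _
  have hden_pos : 0 < |b₁ + t| * (α * t + β) ^ (α:ℝ) := by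
    have : 0 < b₁ + t := by have := neg_abs_le b₁; linarith
    positivity
  have key : t ^ (1 - α) * (1 / (8 * K)) = (t / 2 * (t / 2)) / (2 * t * (K * t ^ (α:ℝ))) := by
    rw [rpow_sub ht0, rpow_one]
    field_simp
    ring
  rw [key]
  refine div_le_div₀ (by positivity) ?_ hden_pos ?_
  · have e1 : t / 2 ≤ |a₁ + t| := by
      have := neg_abs_le a₁; have habs : a₁ + t ≤ |a₁ + t| := le_abs_self _; linarith
    have e2 : t / 2 ≤ |a₂ + t| := by
      have := neg_abs_le a₂; have habs : a₂ + t ≤ |a₂ + t| := le_abs_self _; linarith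
    exact mul_le_mul e1 e2 (by linarith) (abs_nonneg _)
  · have e3 : |b₁ + t| ≤ 2 * t := by
      have h5 := abs_add_le b₁ t
      have : |b₁ + t| ≤ |b₁| + t := by simpa [abs_of_pos ht0] using h5
      linarith
    have e4 : (α * t + β) ^ (α:ℝ) ≤ K * t ^ (α:ℝ) := by
      rw [hKdef, ← mul_rpow (by linarith) (by linarith)]
      refine rpow_le_rpow (by positivity) ?_ hα.le
      nlinarith
    exact mul_le_mul e3 e4 (by positivity) (by linarith)

noncomputable def cc (α β a₁ a₂ b₁ : ℝ) (r : ℕ) : ℝ :=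
  poch a₁ r * poch a₂ r / (poch b₁ r * Real.Gamma (α * r + β))

lemma cc_succ_abs {α β b₁ : ℝ} (a₁ a₂ : ℝ) (hα : 0 < α) (hβ : 0 < β)
    (hb : ∀ n : ℕ, b₁ ≠ -n) (r : ℕ) :
    |cc α β a₁ a₂ b₁ (r + 1)| =
      |cc α β a₁ a₂ b₁ r| * (|a₁ + r| * |a₂ + r| * Real.Gamma (α * r + β)) /
        (|b₁ + r| * Real.Gamma (α * (r + 1) + β)) := by
  have hG : 0 < Real.Gamma (α * r + β) := Real.Gamma_pos_of_pos (by positivity)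
  have hG' : 0 < Real.Gamma (α * (r + 1) + β) := Real.Gamma_pos_of_pos (by positivity)
  have hB : poch b₁ r ≠ 0 := poch_ne_zero hb r
  have hBr : (b₁ + (r:ℝ)) ≠ 0 := fun h => hb r (by linarith)
  unfold cc
  rw [poch_succ, poch_succ, poch_succ]
  push_cast
  simp only [abs_div, abs_mul, abs_of_pos hG, abs_of_pos hG']
  have hBa : |poch b₁ r| ≠ 0 := abs_ne_zero.2 hB
  have hBra : |b₁ + (r:ℝ)| ≠ 0 := abs_ne_zero.2 hBr
  field_simp

lemma not_summable_of_ratio {f : ℕ → ℝ} (N : ℕ) (h : ∀ r, N ≤ r → |f r| ≤ |f (r + 1)|)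
    (h0 : f N ≠ 0) : ¬ Summable f := by
  intro hs
  have key : ∀ r, N ≤ r → |f N| ≤ |f r| := by
    intro r hr
    induction r with
    | zero => simp [Nat.le_zero.1 hr]
    | succ n ih =>
      rcases Nat.lt_or_ge N (n + 1) with h1 | h1
      · exact le_trans (ih (Nat.lt_succ_iff.1 h1)) (h n (Nat.lt_succ_iff.1 h1))
      · have : N = n + 1 := le_antisymm hr h1
        rw [this]
  have h2 := hs.tendsto_atTop_zero
  have h2' : Tendsto (fun r => |f r|) atTop (nhds 0) := by simpa using h2.abs
  have h3 : ∀ᶠ r in atTop, |f r| < |f N| :=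
    h2'.eventually (eventually_lt_nhds (abs_pos.2 h0))
  rcases (h3.and (eventually_ge_atTop N)).exists with ⟨r, hr1, hr2⟩
  exact absurd (key r hr2) (not_le.2 hr1)

lemma summable_ge_one {α β x : ℝ} (a₁ a₂ : ℝ) {b₁ : ℝ} (hα : 1 ≤ α) (hα0 : 0 < α)
    (hβ : 0 < β) (hb : ∀ n : ℕ, b₁ ≠ -n) (hx0 : 0 < x) (hx1 : x < 1) :
    Summable (fun r : ℕ => |cc α β a₁ a₂ b₁ r| * x ^ r) := by
  have hl : (1 + x) / 2 < 1 := by linarith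
  apply summable_of_ratio_norm_eventually_le hl
  have hrt := (tendsto_ratio a₁ a₂ b₁ hα0 β).const_mul x
  have hlt : x * (1 / α) < (1 + x) / 2 := by
    have h1 : 1 / α ≤ 1 := by
      rw [div_le_one hα0]; exact hα
    nlinarith
  filter_upwards [hrt.eventually_lt_const hlt,
    (aux_tendsto_atTop a₁).eventually_gt_atTop 0,
    (aux_tendsto_atTop a₂).eventually_gt_atTop 0,
    (aux_tendsto_atTop b₁).eventually_gt_atTop 0,
    (aux_tendsto_affine hα0 β).eventually_ge_atTop 1] with r hq hp1 hp2 hp3 hp4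
  have hG : 0 < Real.Gamma (α * r + β) := Real.Gamma_pos_of_pos (by positivity)
  have hG' : 0 < Real.Gamma (α * (r + 1) + β) := Real.Gamma_pos_of_pos (by positivity)
  have hGge : (α * r + β) * Real.Gamma (α * r + β) ≤ Real.Gamma (α * (r + 1) + β) := by
    have := Gamma_add_ge hp4 hα
    convert this using 2
    ring
  have habs : |cc α β a₁ a₂ b₁ (r + 1)| =
      |cc α β a₁ a₂ b₁ r| * (|a₁ + r| * |a₂ + r| * Real.Gamma (α * r + β)) /
        (|b₁ + r| * Real.Gamma (α * (r + 1) + β)) := cc_succ_abs a₁ a₂ hα0 hβ hb r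
  set C := |cc α β a₁ a₂ b₁ r| with hC
  have hC0 : 0 ≤ C := abs_nonneg _
  -- step 1 : ratio bound
  have hstep : |cc α β a₁ a₂ b₁ (r + 1)| ≤
      C * ((a₁ + r) * (a₂ + r) / ((b₁ + r) * (α * r + β))) := by
    rw [habs, abs_of_pos hp1, abs_of_pos hp2, abs_of_pos hp3, ← mul_div_assoc,
      div_le_div_iff₀ (by positivity) (by positivity)]
    have h0 : (0:ℝ) ≤ C * ((a₁ + (r:ℝ)) * (a₂ + (r:ℝ))) * (b₁ + (r:ℝ)) := by positivity
    nlinarith [mul_le_mul_of_nonneg_left hGge h0]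
  -- step 2
  have hxr : (0:ℝ) < x ^ r := by positivity
  have hnn : ‖|cc α β a₁ a₂ b₁ (r + 1)| * x ^ (r + 1)‖ =
      |cc α β a₁ a₂ b₁ (r + 1)| * x ^ (r + 1) := by
    rw [Real.norm_of_nonneg (by positivity)]
  rw [hnn, Real.norm_of_nonneg (by positivity)]
  have hq' : 0 ≤ (a₁ + r) * (a₂ + r) / ((b₁ + r) * (α * r + β)) := by positivity
  calc |cc α β a₁ a₂ b₁ (r + 1)| * x ^ (r + 1)
      ≤ C * ((a₁ + r) * (a₂ + r) / ((b₁ + r) * (α * r + β))) * x ^ (r + 1) :=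
        mul_le_mul_of_nonneg_right hstep (by positivity)
    _ = (x * ((a₁ + r) * (a₂ + r) / ((b₁ + r) * (α * r + β)))) * (C * x ^ r) := by ring
    _ ≤ ((1 + x) / 2) * (C * x ^ r) :=
        mul_le_mul_of_nonneg_right hq.le (by positivity)

lemma eventually_ratio_ge {α β : ℝ} (a₁ a₂ : ℝ) {b₁ : ℝ} (hα0 : 0 < α) (hα1 : α < 1)
    (hβ : 0 < β) (hb : ∀ n : ℕ, b₁ ≠ -n) (M : ℝ) :
    ∀ᶠ r : ℕ in atTop, M * |cc α β a₁ a₂ b₁ r| ≤ |cc α β a₁ a₂ b₁ (r + 1)| := by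
  filter_upwards [(tendsto_ratio_atTop a₁ a₂ b₁ hα0 hα1 hβ).eventually_ge_atTop M] with r hg
  rw [cc_succ_abs a₁ a₂ hα0 hβ hb r]
  have hG : 0 < Real.Gamma (α * r + β) := Real.Gamma_pos_of_pos (by positivity)
  have hG' : 0 < Real.Gamma (α * (r + 1) + β) := Real.Gamma_pos_of_pos (by positivity)
  have hBr : (0:ℝ) < |b₁ + r| := abs_pos.2 fun h => hb r (by linarith)
  have hpow : (0:ℝ) < (α * r + β) ^ (α:ℝ) := rpow_pos_of_pos (by positivity) _
  have hGle : Real.Gamma (α * (r + 1) + β) ≤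
      Real.Gamma (α * r + β) * (α * r + β) ^ (α:ℝ) := by
    have := Gamma_add_le (x := α * r + β) (α := α) (by positivity) hα0.le hα1.le
    convert this using 2
    ring
  have hstep : |a₁ + r| * |a₂ + r| / (|b₁ + r| * (α * r + β) ^ (α:ℝ)) ≤
      (|a₁ + r| * |a₂ + r| * Real.Gamma (α * r + β)) /
        (|b₁ + r| * Real.Gamma (α * (r + 1) + β)) := by
    rw [div_le_div_iff₀ (by positivity) (by positivity)]
    have h0 : (0:ℝ) ≤ |a₁ + r| * |a₂ + r| * |b₁ + r| := by positivity
    nlinarith [mul_le_mul_of_nonneg_left hGle h0]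
  have hC0 : (0:ℝ) ≤ |cc α β a₁ a₂ b₁ r| := abs_nonneg _
  calc M * |cc α β a₁ a₂ b₁ r|
      ≤ (|a₁ + r| * |a₂ + r| / (|b₁ + r| * (α * r + β) ^ (α:ℝ))) * |cc α β a₁ a₂ b₁ r| :=
        mul_le_mul_of_nonneg_right hg hC0
    _ ≤ ((|a₁ + r| * |a₂ + r| * Real.Gamma (α * r + β)) /
          (|b₁ + r| * Real.Gamma (α * (r + 1) + β))) * |cc α β a₁ a₂ b₁ r| :=
        mul_le_mul_of_nonneg_right hstep hC0
    _ = |cc α β a₁ a₂ b₁ r| * (|a₁ + r| * |a₂ + r| * Real.Gamma (α * r + β)) /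
          (|b₁ + r| * Real.Gamma (α * (r + 1) + β)) := by ring

theorem hml_integral (α β a₁ a₂ b₁ δ x : ℝ) (hα : 0 < α) (hβ : 0 < β)
    (hδ : -1 < δ) (hb : ∀ n : ℕ, b₁ ≠ -n) (hx0 : 0 < x) (hx1 : x < 1) :
    ∫ u in (0:ℝ)..x,
        u ^ δ * ∑' r : ℕ,
          poch a₁ r * poch a₂ r * u ^ r / (poch b₁ r * Real.Gamma (α * r + β)) =
      x ^ (δ + 1) / (δ + 1) *
        ∑' r : ℕ,
          poch a₁ r * poch a₂ r * poch (δ + 1) r * x ^ r /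
            (poch b₁ r * poch (δ + 2) r * Real.Gamma (α * r + β)) := by
  have hδ1 : (0:ℝ) < δ + 1 := by linarith
  set c : ℕ → ℝ := fun r => cc α β a₁ a₂ b₁ r with hcdef
  have hG : ∀ r : ℕ, 0 < Real.Gamma (α * r + β) := fun r => Real.Gamma_pos_of_pos (by positivity)
  have hB : ∀ r : ℕ, poch b₁ r ≠ 0 := poch_ne_zero hb
  have term_eq : ∀ (u : ℝ) (r : ℕ),
      poch a₁ r * poch a₂ r * u ^ r / (poch b₁ r * Real.Gamma (α * r + β)) = c r * u ^ r := by
    intro u r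
    simp only [hcdef]
    unfold cc
    ring
  have hp2pos : ∀ r : ℕ, 0 < poch (δ + 2) r := fun r => poch_pos (by linarith) r
  have hδr : ∀ r : ℕ, (0:ℝ) < δ + 1 + r := fun r => by positivity
  have hratio : ∀ r : ℕ, poch (δ + 1) r / poch (δ + 2) r = (δ + 1) / (δ + 1 + r) := by
    intro r
    rw [div_eq_div_iff (hp2pos r).ne' (hδr r).ne']
    linear_combination poch_key δ r
  have termD_eq : ∀ r : ℕ,
      poch a₁ r * poch a₂ r * poch (δ + 1) r * x ^ r /
        (poch b₁ r * poch (δ + 2) r * Real.Gamma (α * r + β)) =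
      c r * ((δ + 1) / (δ + 1 + r)) * x ^ r := by
    intro r
    rw [← hratio r]
    simp only [hcdef]
    unfold cc
    field_simp
  by_cases hsum : Summable (fun r : ℕ => |c r| * x ^ r)
  · -- convergent case
    have hexp : ∀ r : ℕ, (-1:ℝ) < δ + r := by
      intro r
      have : (0:ℝ) ≤ r := Nat.cast_nonneg r
      linarith
    have hexp1 : ∀ r : ℕ, (0:ℝ) < δ + r + 1 := fun r => by linarith [hexp r]
    have hint_val : ∀ r : ℕ,
        (∫ u in Set.Ioc (0:ℝ) x, u ^ (δ + r)) = x ^ (δ + r + 1) / (δ + r + 1) := by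
      intro r
      rw [← intervalIntegral.integral_of_le hx0.le, integral_rpow (Or.inl (hexp r)),
        Real.zero_rpow (hexp1 r).ne']
      ring
    have hIu : ∀ r : ℕ, MeasureTheory.IntegrableOn
        (fun u : ℝ => c r * u ^ (δ + r)) (Set.Ioc 0 x) := by
      intro r
      exact ((intervalIntegral.intervalIntegrable_rpow' (hexp r) (a := 0) (b := x)).1).const_mul _
    have hpow_split : ∀ r : ℕ, x ^ (δ + (r:ℝ) + 1) = x ^ (δ + 1) * x ^ r := by
      intro r
      rw [show δ + (r:ℝ) + 1 = (δ + 1) + (r:ℝ) by ring, rpow_add hx0, rpow_natCast]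
    have hnorm_eq : ∀ r : ℕ,
        (∫ u in Set.Ioc (0:ℝ) x, ‖c r * u ^ (δ + r)‖) =
          |c r| * (x ^ (δ + r + 1) / (δ + r + 1)) := by
      intro r
      rw [MeasureTheory.setIntegral_congr_fun (g := fun u : ℝ => |c r| * u ^ (δ + r))
        measurableSet_Ioc (fun u hu => by
          rw [Real.norm_eq_abs, abs_mul, abs_of_pos (rpow_pos_of_pos hu.1 _)]),
        MeasureTheory.integral_const_mul, hint_val r]
    have hsum_norm : Summable fun r : ℕ => ∫ u in Set.Ioc (0:ℝ) x, ‖c r * u ^ (δ + r)‖ := by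
      apply Summable.of_nonneg_of_le
        (fun r => MeasureTheory.integral_nonneg fun u => norm_nonneg _)
        (fun r => ?_) (hsum.mul_left (x ^ (δ + 1) / (δ + 1)))
      rw [hnorm_eq r, hpow_split r]
      have h1 : x ^ (δ + 1) * x ^ r / (δ + (r:ℝ) + 1) ≤ x ^ (δ + 1) * x ^ r / (δ + 1) := by
        have hA : (0:ℝ) ≤ x ^ (δ + 1) * x ^ r := by positivity
        rw [div_le_div_iff₀ (hexp1 r) hδ1]
        nlinarith [mul_nonneg hA (Nat.cast_nonneg (α := ℝ) r)]
      calc |c r| * (x ^ (δ + 1) * x ^ r / (δ + (r:ℝ) + 1))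
          ≤ |c r| * (x ^ (δ + 1) * x ^ r / (δ + 1)) :=
            mul_le_mul_of_nonneg_left h1 (abs_nonneg _)
        _ = x ^ (δ + 1) / (δ + 1) * (|c r| * x ^ r) := by ring
    have hint_val2 : ∀ r : ℕ,
        (∫ u in Set.Ioc (0:ℝ) x, c r * u ^ (δ + r)) =
          c r * (x ^ (δ + r + 1) / (δ + r + 1)) := by
      intro r
      rw [MeasureTheory.integral_const_mul, hint_val r]
    rw [intervalIntegral.integral_of_le hx0.le]
    calc (∫ u in Set.Ioc (0:ℝ) x, u ^ δ * ∑' r : ℕ,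
            poch a₁ r * poch a₂ r * u ^ r / (poch b₁ r * Real.Gamma (α * r + β)))
        = ∫ u in Set.Ioc (0:ℝ) x, ∑' r : ℕ, c r * u ^ (δ + r) := by
          refine MeasureTheory.setIntegral_congr_fun measurableSet_Ioc fun u hu => ?_
          have hu0 : 0 < u := hu.1
          calc u ^ δ * ∑' r : ℕ,
                poch a₁ r * poch a₂ r * u ^ r / (poch b₁ r * Real.Gamma (α * r + β))
              = u ^ δ * ∑' r : ℕ, c r * u ^ r := by rw [tsum_congr fun r => term_eq u r]
            _ = ∑' r : ℕ, u ^ δ * (c r * u ^ r) := tsum_mul_left.symm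
            _ = ∑' r : ℕ, c r * u ^ (δ + r) := by
                refine tsum_congr fun r => ?_
                rw [rpow_add hu0, rpow_natCast]
                ring
      _ = ∑' r : ℕ, ∫ u in Set.Ioc (0:ℝ) x, c r * u ^ (δ + r) :=
          (MeasureTheory.integral_tsum_of_summable_integral_norm hIu hsum_norm).symm
      _ = ∑' r : ℕ, c r * (x ^ (δ + r + 1) / (δ + r + 1)) := tsum_congr hint_val2
      _ = x ^ (δ + 1) / (δ + 1) * ∑' r : ℕ,
            poch a₁ r * poch a₂ r * poch (δ + 1) r * x ^ r /
              (poch b₁ r * poch (δ + 2) r * Real.Gamma (α * r + β)) := by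
          rw [tsum_congr termD_eq, ← tsum_mul_left]
          refine tsum_congr fun r => ?_
          rw [hpow_split r, show δ + (r:ℝ) + 1 = δ + 1 + (r:ℝ) by ring]
          have h2 := (hδr r).ne'
          field_simp
  · -- divergent case
    have hα1 : α < 1 := by
      by_contra h
      push_neg at h
      exact hsum (summable_ge_one a₁ a₂ h hα hβ hb hx0 hx1)
    have ha₁ : ∀ n : ℕ, a₁ ≠ -n := by
      intro n hn
      apply hsum
      apply summable_of_ne_finset_zero (s := Finset.range (n + 1))
      intro r hr
      have hrn : n < r := by simpa [Finset.mem_range, Nat.lt_succ_iff, not_lt] using hr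
      have hz : poch a₁ r = 0 := by
        rw [poch_eq_prod]
        exact Finset.prod_eq_zero (Finset.mem_range.2 hrn) (by rw [hn]; ring)
      simp [hcdef, cc, hz]
    have ha₂ : ∀ n : ℕ, a₂ ≠ -n := by
      intro n hn
      apply hsum
      apply summable_of_ne_finset_zero (s := Finset.range (n + 1))
      intro r hr
      have hrn : n < r := by simpa [Finset.mem_range, Nat.lt_succ_iff, not_lt] using hr
      have hz : poch a₂ r = 0 := by
        rw [poch_eq_prod]
        exact Finset.prod_eq_zero (Finset.mem_range.2 hrn) (by rw [hn]; ring)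
      simp [hcdef, cc, hz]
    have hcne : ∀ r : ℕ, c r ≠ 0 := by
      intro r
      simp only [hcdef]
      unfold cc
      exact div_ne_zero (mul_ne_zero (poch_ne_zero ha₁ r) (poch_ne_zero ha₂ r))
        (mul_ne_zero (hB r) (hG r).ne')
    have hnotu : ∀ u : ℝ, 0 < u → ¬ Summable (fun r : ℕ => c r * u ^ r) := by
      intro u hu
      obtain ⟨N, hN⟩ := eventually_atTop.1 (eventually_ratio_ge a₁ a₂ hα hα1 hβ hb (1 / u))
      refine not_summable_of_ratio N (fun r hr => ?_) (mul_ne_zero (hcne N) (by positivity))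
      have h1 := hN r hr
      rw [abs_mul, abs_mul, abs_pow, abs_pow, abs_of_pos hu]
      have h2 : |c r| ≤ u * |c (r + 1)| := by
        have := mul_le_mul_of_nonneg_left h1 hu.le
        rw [show u * (1 / u * |c r|) = |c r| by field_simp] at this
        exact this
      calc |c r| * u ^ r ≤ u * |c (r + 1)| * u ^ r :=
            mul_le_mul_of_nonneg_right h2 (by positivity)
        _ = |c (r + 1)| * u ^ (r + 1) := by ring
    have hLHS : (∫ u in (0:ℝ)..x, u ^ δ * ∑' r : ℕ,
        poch a₁ r * poch a₂ r * u ^ r / (poch b₁ r * Real.Gamma (α * r + β))) = 0 := by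
      rw [intervalIntegral.integral_of_le hx0.le]
      rw [MeasureTheory.setIntegral_congr_fun (g := fun _ : ℝ => (0:ℝ)) measurableSet_Ioc
        (fun u hu => ?_)]
      · simp
      · have h0 : (∑' r : ℕ,
            poch a₁ r * poch a₂ r * u ^ r / (poch b₁ r * Real.Gamma (α * r + β))) = 0 := by
          rw [tsum_congr fun r => term_eq u r]
          exact tsum_eq_zero_of_not_summable (hnotu u hu.1)
        simp [h0]
    have hD : ¬ Summable (fun r : ℕ => c r * ((δ + 1) / (δ + 1 + r)) * x ^ r) := by
      obtain ⟨N, hN⟩ := eventually_atTop.1 (eventually_ratio_ge a₁ a₂ hα hα1 hβ hb (2 / x))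
      refine not_summable_of_ratio (max N 1) (fun r hr => ?_) ?_
      · have hrN : N ≤ r := le_trans (le_max_left _ _) hr
        have hr1 : (1:ℝ) ≤ r := by exact_mod_cast le_trans (le_max_right _ _) hr
        have h1 := hN r hrN
        have hd1 : (0:ℝ) < δ + 1 + r := hδr r
        have hd2 : (0:ℝ) < δ + 1 + ((r:ℝ) + 1) := by linarith
        have hx2 : (0:ℝ) < x ^ r := by positivity
        have h2 : 2 * (|c r| * x ^ r) ≤ |c (r + 1)| * x ^ (r + 1) := by
          have := mul_le_mul_of_nonneg_right h1 (le_of_lt (show (0:ℝ) < x ^ (r+1) by positivity))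
          calc 2 * (|c r| * x ^ r) = 2 / x * |c r| * x ^ (r + 1) := by
                field_simp
                ring
            _ ≤ |c (r + 1)| * x ^ (r + 1) := this
        have e1 : |c r * ((δ + 1) / (δ + 1 + r)) * x ^ r| =
            |c r| * x ^ r * ((δ + 1) / (δ + 1 + r)) := by
          rw [abs_mul, abs_mul, abs_pow, abs_of_pos hx0, abs_of_pos (div_pos hδ1 hd1)]
          ring
        have e2 : |c (r + 1) * ((δ + 1) / (δ + 1 + ((r:ℝ) + 1))) * x ^ (r + 1)| =
            |c (r + 1)| * x ^ (r + 1) * ((δ + 1) / (δ + 1 + ((r:ℝ) + 1))) := by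
          rw [abs_mul, abs_mul, abs_pow, abs_of_pos hx0, abs_of_pos (div_pos hδ1 hd2)]
          ring
        push_cast
        rw [e1, e2]
        rw [mul_div_assoc', mul_div_assoc', div_le_div_iff₀ hd1 hd2]
        nlinarith [mul_le_mul_of_nonneg_right h2 (mul_pos hδ1 hd1).le,
          mul_nonneg (mul_nonneg (abs_nonneg (c r)) hx2.le) hδ1.le]
      · exact mul_ne_zero (mul_ne_zero (hcne _) (div_pos hδ1 (hδr _)).ne') (by positivity)
    have hRHS : (∑' r : ℕ, poch a₁ r * poch a₂ r * poch (δ + 1) r * x ^ r /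
        (poch b₁ r * poch (δ + 2) r * Real.Gamma (α * r + β))) = 0 := by
      rw [tsum_congr termD_eq]
      exact tsum_eq_zero_of_not_summable hD
    rw [hLHS, hRHS, mul_zero]
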